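/- For |q| < 1, the triple sum ∑_{n₁,n₂,n₃≥0} q^{n₁+n₂+n₃+n₁n₂+n₂n₃} / ((q;q)_{n₁} (q;q)_{n₂} (q;q)_{n₃}) equals q^{-1}(1-(q;q)_∞)/(q;q)_∞². -/

import Mathlib

/-- The finite q-Pochhammer symbol `(q;q)_n`. -/
noncomputable def qPoch (q : ℂ) (n : ℕ) : ℂ := ∏ i ∈ Finset.range n, (1 - q ^ (i + 1))

/-- The infinite q-Pochhammer symbol `(q;q)_∞`. -/
noncomputable def qPochInf (q : ℂ) : ℂ := ∏' i : ℕ, (1 - q ^ (i + 1))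

/-- The infinite q-Pochhammer symbol `(a;q)_∞ = ∏_{i≥0} (1 - a q^i)`. -/
noncomputable def pochInf (a q : ℂ) : ℂ := ∏' i : ℕ, (1 - a * q ^ i)

set_option maxHeartbeats 1000000

open Filter Topology Complex

lemma norm_pow_lt {q : ℂ} (hq : ‖q‖ < 1) (i : ℕ) (hi : 1 ≤ i) : ‖q ^ i‖ < 1 := by
  rw [norm_pow]
  calc ‖q‖ ^ i ≤ ‖q‖ ^ 1 := pow_le_pow_of_le_one (norm_nonneg q) hq.le hi
  _ < 1 := by simpa using hq

lemma one_sub_pow_ne {q : ℂ} (hq : ‖q‖ < 1) (i : ℕ) : (1 : ℂ) - q ^ (i + 1) ≠ 0 := by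
  intro h
  have : ‖q ^ (i+1)‖ < 1 := norm_pow_lt hq (i+1) (Nat.le_add_left 1 i)
  rw [sub_eq_zero] at h
  rw [← h] at this
  simp at this

lemma qPoch_succ (q : ℂ) (n : ℕ) : qPoch q (n + 1) = qPoch q n * (1 - q ^ (n + 1)) := by
  simp [qPoch, Finset.prod_range_succ]

lemma qPoch_ne_zero {q : ℂ} (hq : ‖q‖ < 1) (n : ℕ) : qPoch q n ≠ 0 :=
  Finset.prod_ne_zero_iff.2 fun i _ => one_sub_pow_ne hq i

lemma summable_geom_pow {q : ℂ} (hq : ‖q‖ < 1) : Summable (fun n : ℕ => ‖q‖ ^ (n + 1)) :=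
  (summable_nat_add_iff 1).2 (summable_geometric_of_lt_one (norm_nonneg q) hq)

lemma summable_log {q : ℂ} (hq : ‖q‖ < 1) :
    Summable (fun n : ℕ => Complex.log (1 - q ^ (n + 1))) := by
  apply Summable.of_norm
  refine Summable.of_nonneg_of_le (fun n => norm_nonneg _) (fun n => ?_)
    (((summable_geom_pow hq).mul_left ((1 - ‖q‖)⁻¹ / 2 + 1)))
  have hz : ‖-q ^ (n+1)‖ < 1 := by
    rw [norm_neg]; exact norm_pow_lt hq (n+1) (Nat.le_add_left 1 n)
  have h0 := Complex.norm_log_one_add_le hz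
  rw [show (1 : ℂ) + -q ^ (n+1) = 1 - q ^ (n+1) by ring] at h0
  refine h0.trans ?_
  rw [norm_neg, norm_pow]
  set t : ℝ := ‖q‖ ^ (n+1) with ht
  have ht0 : 0 ≤ t := pow_nonneg (norm_nonneg q) _
  have ht1 : t ≤ ‖q‖ := by simpa using pow_le_pow_of_le_one (norm_nonneg q) hq.le (Nat.le_add_left 1 n)
  have hq1 : (0:ℝ) < 1 - ‖q‖ := by linarith
  have hinv : (1 - t)⁻¹ ≤ (1 - ‖q‖)⁻¹ := by
    apply inv_anti₀ hq1; linarith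
  have hsq : t ^ 2 ≤ t * 1 := by nlinarith
  have h2 : t ^ 2 * (1 - t)⁻¹ / 2 ≤ (t * 1) * (1 - ‖q‖)⁻¹ / 2 := by
    gcongr
    exact inv_nonneg.2 (by linarith)
  have h3 : (t * 1) * (1 - ‖q‖)⁻¹ / 2 = t * ((1 - ‖q‖)⁻¹ / 2) := by ring
  calc t ^ 2 * (1 - t)⁻¹ / 2 + t ≤ t * ((1 - ‖q‖)⁻¹ / 2) + t := by
        rw [← h3]; linarith
    _ = ((1 - ‖q‖)⁻¹ / 2 + 1) * t := by ring

lemma qPochInf_eq_exp {q : ℂ} (hq : ‖q‖ < 1) :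
    qPochInf q = Complex.exp (∑' n : ℕ, Complex.log (1 - q ^ (n + 1))) := by
  have := Complex.cexp_tsum_eq_tprod (f := fun n : ℕ => 1 - q ^ (n + 1))
    (fun n => one_sub_pow_ne hq n) (summable_log hq)
  have h2 := this
  simpa [qPochInf] using h2.symm

lemma qPochInf_ne_zero {q : ℂ} (hq : ‖q‖ < 1) : qPochInf q ≠ 0 := by
  rw [qPochInf_eq_exp hq]; exact Complex.exp_ne_zero _

lemma multipliable_qPochInf {q : ℂ} (hq : ‖q‖ < 1) :
    Multipliable (fun n : ℕ => 1 - q ^ (n + 1)) :=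
  Complex.multipliable_of_summable_log (summable_log hq)

lemma tendsto_qPoch {q : ℂ} (hq : ‖q‖ < 1) :
    Tendsto (fun n => qPoch q n) atTop (𝓝 (qPochInf q)) :=
  (multipliable_qPochInf hq).hasProd.tendsto_prod_nat

lemma exists_pos_le_qPoch {q : ℂ} (hq : ‖q‖ < 1) :
    ∃ c : ℝ, 0 < c ∧ ∀ n, c ≤ ‖qPoch q n‖ := by
  set L := ‖qPochInf q‖ with hL
  have hL0 : 0 < L := norm_pos_iff.2 (qPochInf_ne_zero hq)
  have hev : ∀ᶠ n in atTop, L / 2 < ‖qPoch q n‖ :=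
    (tendsto_qPoch hq).norm.eventually (eventually_gt_nhds (by linarith))
  obtain ⟨N, hN⟩ := eventually_atTop.1 hev
  refine ⟨min (L / 2) (((Finset.range (N + 1)).image (fun k => ‖qPoch q k‖)).min'
    (by simp)), ?_, ?_⟩
  · apply lt_min (by linarith)
    obtain ⟨x, hx, hxe⟩ := Finset.mem_image.1
      ((((Finset.range (N + 1)).image (fun k => ‖qPoch q k‖))).min'_mem (by simp))
    rw [← hxe]
    exact norm_pos_iff.2 (qPoch_ne_zero hq x)
  · intro n
    rcases le_or_gt n N with h | h
    · refine le_trans (min_le_right _ _) (Finset.min'_le _ _ ?_)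
      exact Finset.mem_image.2 ⟨n, Finset.mem_range.2 (by omega), rfl⟩
    · exact le_trans (min_le_left _ _) (hN n (by omega)).le

lemma exists_qPoch_le {q : ℂ} (hq : ‖q‖ < 1) :
    ∃ M : ℝ, ∀ n, ‖qPoch q n‖ ≤ M := by
  have := (tendsto_qPoch hq).norm.bddAbove_range
  obtain ⟨M, hM⟩ := this
  exact ⟨M, fun n => hM ⟨n, rfl⟩⟩

lemma summable_norm_E {q : ℂ} (hq : ‖q‖ < 1) (m : ℕ) :
    Summable (fun n : ℕ => ‖q ^ ((m + 1) * n) / qPoch q n‖) := by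
  obtain ⟨c, hc0, hc⟩ := exists_pos_le_qPoch hq
  refine Summable.of_nonneg_of_le (fun n => norm_nonneg _) (fun n => ?_)
    ((summable_geometric_of_lt_one (norm_nonneg q) hq).mul_right c⁻¹)
  rw [norm_div, norm_pow]
  have h1 : ‖q‖ ^ ((m + 1) * n) ≤ ‖q‖ ^ n :=
    pow_le_pow_of_le_one (norm_nonneg q) hq.le (Nat.le_mul_of_pos_left n m.succ_pos)
  have h2 : ‖qPoch q n‖⁻¹ ≤ c⁻¹ := by
    apply inv_anti₀ hc0 (hc n)
  calc ‖q‖ ^ ((m+1)*n) / ‖qPoch q n‖ = ‖q‖ ^ ((m+1)*n) * ‖qPoch q n‖⁻¹ := div_eq_mul_inv _ _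
    _ ≤ ‖q‖ ^ n * c⁻¹ := by
        apply mul_le_mul h1 h2 (inv_nonneg.2 (norm_nonneg _)) (pow_nonneg (norm_nonneg _) _)

lemma summable_E {q : ℂ} (hq : ‖q‖ < 1) (m : ℕ) :
    Summable (fun n : ℕ => q ^ ((m + 1) * n) / qPoch q n) :=
  (summable_norm_E hq m).of_norm

lemma funcEq {q : ℂ} (hq : ‖q‖ < 1) (m : ℕ) :
    (∑' n : ℕ, q ^ ((m + 2) * n) / qPoch q n)
      = (1 - q ^ (m + 1)) * ∑' n : ℕ, q ^ ((m + 1) * n) / qPoch q n := by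
  set d : ℕ → ℂ := fun n => if n = 0 then 0 else q ^ ((m + 1) * n) / qPoch q (n - 1) with hd
  have hterm : ∀ n : ℕ,
      q ^ ((m + 1) * n) / qPoch q n - q ^ ((m + 2) * n) / qPoch q n = d n := by
    rintro (_ | k)
    · simp [hd]
    · have hne : qPoch q k ≠ 0 := qPoch_ne_zero hq k
      have hne2 : (1 : ℂ) - q ^ (k + 1) ≠ 0 := one_sub_pow_ne hq k
      simp only [hd, if_neg (Nat.succ_ne_zero k), Nat.succ_sub_one]
      rw [qPoch_succ]
      have hexp : (m + 2) * (k + 1) = (m + 1) * (k + 1) + (k + 1) := by ring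
      rw [hexp, pow_add q ((m+1)*(k+1)) (k+1), div_sub_div_same,
        show q ^ ((m+1)*(k+1)) - q ^ ((m+1)*(k+1)) * q ^ (k+1)
          = (1 - q ^ (k+1)) * q ^ ((m+1)*(k+1)) by ring,
        show qPoch q k * (1 - q ^ (k+1)) = (1 - q ^ (k+1)) * qPoch q k by ring,
        mul_div_mul_left _ _ hne2]
  have hsum1 := summable_E hq m
  have hsum2 : Summable (fun n : ℕ => q ^ ((m + 2) * n) / qPoch q n) := summable_E hq (m + 1)
  have hsumd : Summable d := by
    have := hsum1.sub hsum2
    apply this.congr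
    intro n
    exact hterm n
  have key : (∑' n : ℕ, q ^ ((m + 1) * n) / qPoch q n)
      - (∑' n : ℕ, q ^ ((m + 2) * n) / qPoch q n) = ∑' n, d n := by
    rw [← Summable.tsum_sub hsum1 hsum2]
    exact tsum_congr hterm
  have hd2 : ∑' n, d n = q ^ (m + 1) * ∑' n : ℕ, q ^ ((m + 1) * n) / qPoch q n := by
    rw [Summable.tsum_eq_zero_add hsumd]
    simp only [hd, if_neg (Nat.succ_ne_zero _), Nat.succ_sub_one, if_pos rfl, zero_add]
    rw [← tsum_mul_left]
    apply tsum_congr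
    intro k
    have : (m + 1) * (k + 1) = (m + 1) + (m + 1) * k := by ring
    rw [this, pow_add]
    ring
  rw [hd2] at key
  linear_combination -key

lemma E_eq {q : ℂ} (hq : ‖q‖ < 1) (m : ℕ) :
    (∑' n : ℕ, q ^ ((m + 1) * n) / qPoch q n)
      = qPoch q m * ∑' n : ℕ, q ^ (1 * n) / qPoch q n := by
  induction m with
  | zero => simp [qPoch]
  | succ k ih =>
      have := funcEq hq k
      rw [show k + 1 + 1 = k + 2 from rfl, this, ih, qPoch_succ]
      ring

lemma tendsto_E_one {q : ℂ} (hq : ‖q‖ < 1) :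
    Tendsto (fun m : ℕ => ∑' n : ℕ, q ^ ((m + 1) * n) / qPoch q n) atTop (𝓝 1) := by
  obtain ⟨c, hc0, hc⟩ := exists_pos_le_qPoch hq
  rw [tendsto_iff_norm_sub_tendsto_zero]
  have key : ∀ m : ℕ, ‖(∑' n : ℕ, q ^ ((m + 1) * n) / qPoch q n) - 1‖
      ≤ (c⁻¹ * (1 - ‖q‖)⁻¹) * ‖q‖ ^ (m + 1) := by
    intro m
    have hsplit := Summable.tsum_eq_zero_add (summable_E hq m)
    have h0 : q ^ ((m + 1) * 0) / qPoch q 0 = 1 := by simp [qPoch]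
    rw [h0] at hsplit
    rw [hsplit]
    rw [add_sub_cancel_left]
    have hnorm : Summable (fun k : ℕ => ‖q ^ ((m + 1) * (k + 1)) / qPoch q (k + 1)‖) := by
      have := summable_norm_E hq m
      exact (summable_nat_add_iff 1).2 this
    refine (norm_tsum_le_tsum_norm hnorm).trans ?_
    have hgeo : Summable (fun k : ℕ => (c⁻¹ * ‖q‖ ^ (m + 1)) * ‖q‖ ^ k) :=
      (summable_geometric_of_lt_one (norm_nonneg q) hq).mul_left _
    refine le_trans (Summable.tsum_le_tsum (fun k => ?_) hnorm hgeo) ?_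
    · rw [norm_div, norm_pow]
      have h1 : ‖q‖ ^ ((m + 1) * (k + 1)) ≤ ‖q‖ ^ (m + 1 + k) := by
        apply pow_le_pow_of_le_one (norm_nonneg q) hq.le
        nlinarith
      have h2 : ‖qPoch q (k + 1)‖⁻¹ ≤ c⁻¹ := inv_anti₀ hc0 (hc _)
      calc ‖q‖ ^ ((m+1)*(k+1)) / ‖qPoch q (k+1)‖
          = ‖q‖ ^ ((m+1)*(k+1)) * ‖qPoch q (k+1)‖⁻¹ := div_eq_mul_inv _ _
        _ ≤ ‖q‖ ^ (m + 1 + k) * c⁻¹ :=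
            mul_le_mul h1 h2 (inv_nonneg.2 (norm_nonneg _)) (pow_nonneg (norm_nonneg _) _)
        _ = (c⁻¹ * ‖q‖ ^ (m + 1)) * ‖q‖ ^ k := by rw [pow_add]; ring
    · rw [tsum_mul_left, tsum_geometric_of_lt_one (norm_nonneg q) hq]
      apply le_of_eq
      ring
  have hb : Tendsto (fun m : ℕ => (c⁻¹ * (1 - ‖q‖)⁻¹) * ‖q‖ ^ (m + 1)) atTop (𝓝 0) := by
    have h1 : Tendsto (fun m : ℕ => ‖q‖ ^ (m + 1)) atTop (𝓝 0) := by
      have := tendsto_pow_atTop_nhds_zero_of_lt_one (norm_nonneg q) hq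
      exact this.comp (tendsto_add_atTop_nat 1)
    simpa using h1.const_mul (c⁻¹ * (1 - ‖q‖)⁻¹)
  exact squeeze_zero (fun m => norm_nonneg _) key hb

lemma E1_eq {q : ℂ} (hq : ‖q‖ < 1) :
    (∑' n : ℕ, q ^ (1 * n) / qPoch q n) = (qPochInf q)⁻¹ := by
  have h1 : Tendsto (fun m : ℕ => qPoch q m * ∑' n : ℕ, q ^ (1 * n) / qPoch q n) atTop
      (𝓝 (qPochInf q * ∑' n : ℕ, q ^ (1 * n) / qPoch q n)) :=
    (tendsto_qPoch hq).mul_const _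
  have h2 : Tendsto (fun m : ℕ => qPoch q m * ∑' n : ℕ, q ^ (1 * n) / qPoch q n) atTop (𝓝 1) := by
    have := tendsto_E_one hq
    apply this.congr
    intro m
    exact E_eq hq m
  have h3 := tendsto_nhds_unique h1 h2
  exact eq_inv_of_mul_eq_one_right h3

lemma euler {q : ℂ} (hq : ‖q‖ < 1) (m : ℕ) :
    (∑' n : ℕ, q ^ ((m + 1) * n) / qPoch q n) = qPoch q m * (qPochInf q)⁻¹ := by
  rw [E_eq hq m, E1_eq hq]

lemma summable_tel {q : ℂ} (hq : ‖q‖ < 1) :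
    Summable (fun n : ℕ => q ^ (n + 1) * qPoch q n) := by
  obtain ⟨M, hM⟩ := exists_qPoch_le hq
  have hM0 : 0 ≤ M := le_trans (norm_nonneg _) (hM 0)
  apply Summable.of_norm
  refine Summable.of_nonneg_of_le (fun n => norm_nonneg _) (fun n => ?_)
    ((summable_geom_pow hq).mul_right M)
  rw [norm_mul, norm_pow]
  exact mul_le_mul le_rfl (hM n) (norm_nonneg _) (pow_nonneg (norm_nonneg _) _)

lemma tel {q : ℂ} (hq : ‖q‖ < 1) :
    ∑' n : ℕ, q ^ (n + 1) * qPoch q n = 1 - qPochInf q := by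
  have hs := summable_tel hq
  have h1 := hs.hasSum.tendsto_sum_nat
  have h2 : ∀ N : ℕ, ∑ i ∈ Finset.range N, q ^ (i + 1) * qPoch q i = 1 - qPoch q N := by
    intro N
    have := Finset.sum_range_sub' (f := fun n => qPoch q n) (n := N)
    rw [show qPoch q 0 = 1 by simp [qPoch]] at this
    rw [← this]
    apply Finset.sum_congr rfl
    intro i _
    rw [qPoch_succ]
    ring
  have h3 : Tendsto (fun N : ℕ => ∑ i ∈ Finset.range N, q ^ (i + 1) * qPoch q i) atTop
      (𝓝 (1 - qPochInf q)) := by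
    simp only [h2]
    exact tendsto_const_nhds.sub (tendsto_qPoch hq)
  exact tendsto_nhds_unique h1 h3

lemma summable_norm_triple {q : ℂ} (hq : ‖q‖ < 1) :
    Summable (fun n : ℕ × ℕ × ℕ =>
      ‖q ^ (n.1 + n.2.1 + n.2.2 + n.1 * n.2.1 + n.2.1 * n.2.2)
        / (qPoch q n.1 * qPoch q n.2.1 * qPoch q n.2.2)‖) := by
  obtain ⟨c, hc0, hc⟩ := exists_pos_le_qPoch hq
  have hgeo : Summable (fun k : ℕ => ‖q‖ ^ k * c⁻¹) :=
    (summable_geometric_of_lt_one (norm_nonneg q) hq).mul_right _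
  have hnn : ∀ k : ℕ, 0 ≤ ‖q‖ ^ k * c⁻¹ := fun k => by positivity
  have hpair : Summable (fun z : ℕ × ℕ => (‖q‖ ^ z.1 * c⁻¹) * (‖q‖ ^ z.2 * c⁻¹)) :=
    hgeo.mul_of_nonneg hgeo hnn hnn
  have htrip : Summable (fun n : ℕ × ℕ × ℕ =>
      (‖q‖ ^ n.1 * c⁻¹) * ((‖q‖ ^ n.2.1 * c⁻¹) * (‖q‖ ^ n.2.2 * c⁻¹))) :=
    hgeo.mul_of_nonneg hpair hnn (fun z => mul_nonneg (hnn _) (hnn _))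
  refine Summable.of_nonneg_of_le (fun n => norm_nonneg _) (fun n => ?_) htrip
  obtain ⟨n1, n2, n3⟩ := n
  simp only [norm_div, norm_pow, norm_mul]
  have h1 : ‖q‖ ^ (n1 + n2 + n3 + n1 * n2 + n2 * n3) ≤ ‖q‖ ^ (n1 + n2 + n3) :=
    pow_le_pow_of_le_one (norm_nonneg q) hq.le (by omega)
  have hpos : ∀ k, (0:ℝ) < ‖qPoch q k‖ := fun k => lt_of_lt_of_le hc0 (hc k)
  calc ‖q‖ ^ (n1 + n2 + n3 + n1 * n2 + n2 * n3) / (‖qPoch q n1‖ * ‖qPoch q n2‖ * ‖qPoch q n3‖)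
      ≤ ‖q‖ ^ (n1 + n2 + n3) / (c * c * c) := by
        apply div_le_div₀ (pow_nonneg (norm_nonneg q) _) h1 (by positivity)
        have h12 : c * c ≤ ‖qPoch q n1‖ * ‖qPoch q n2‖ :=
          mul_le_mul (hc n1) (hc n2) hc0.le (norm_nonneg _)
        exact mul_le_mul h12 (hc n3) hc0.le (by positivity)
    _ = (‖q‖ ^ n1 * c⁻¹) * ((‖q‖ ^ n2 * c⁻¹) * (‖q‖ ^ n3 * c⁻¹)) := by
        rw [pow_add, pow_add]
        field_simp

lemma innerDoubleSum {q : ℂ} (hq : ‖q‖ < 1) (m : ℕ) :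
    (∑' z : ℕ × ℕ, (q ^ ((m + 1) * z.1) / qPoch q z.1)
        * ((q ^ m / qPoch q m) * (q ^ ((m + 1) * z.2) / qPoch q z.2)))
      = (q ^ m * qPoch q m) * ((qPochInf q)⁻¹) ^ 2 := by
  have hu := summable_norm_E hq m
  have step1 : ∀ z : ℕ × ℕ, (q ^ ((m + 1) * z.1) / qPoch q z.1)
      * ((q ^ m / qPoch q m) * (q ^ ((m + 1) * z.2) / qPoch q z.2))
      = (q ^ m / qPoch q m) * ((q ^ ((m + 1) * z.1) / qPoch q z.1)
          * (q ^ ((m + 1) * z.2) / qPoch q z.2)) := fun z => by ring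
  rw [tsum_congr step1, tsum_mul_left, ← tsum_mul_tsum_of_summable_norm hu hu,
    euler hq m]
  have h1 : qPoch q m ≠ 0 := qPoch_ne_zero hq m
  rw [div_mul_eq_mul_div, div_eq_iff h1]
  ring

theorem stmt4' (q : ℂ) (hq : ‖q‖ < 1) (hq0 : q ≠ 0) :
    ∑' n : ℕ × ℕ × ℕ,
        q ^ (n.1 + n.2.1 + n.2.2 + n.1 * n.2.1 + n.2.1 * n.2.2)
          / (qPoch q n.1 * qPoch q n.2.1 * qPoch q n.2.2)
      = q⁻¹ * (1 - qPochInf q) / qPochInf q ^ 2 := by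
  set t : ℕ × ℕ × ℕ → ℂ := fun n =>
    q ^ (n.1 + n.2.1 + n.2.2 + n.1 * n.2.1 + n.2.1 * n.2.2)
      / (qPoch q n.1 * qPoch q n.2.1 * qPoch q n.2.2) with ht
  have hts : Summable t := (summable_norm_triple hq).of_norm
  set e : ℕ × ℕ × ℕ ≃ ℕ × ℕ × ℕ :=
    ⟨fun p => (p.2.1, p.1, p.2.2), fun p => (p.2.1, p.1, p.2.2),
      by rintro ⟨a, b, c⟩; rfl, by rintro ⟨a, b, c⟩; rfl⟩ with he
  have h0 : ∑' n, t n = ∑' n, t (e n) := (e.tsum_eq t).symm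
  have hte : Summable (fun n => t (e n)) := e.summable_iff.2 hts
  have h1 : ∑' n, t (e n) = ∑' (m : ℕ), ∑' (z : ℕ × ℕ), t (e (m, z)) := by
    exact Summable.tsum_prod hte
  have h2 : ∀ m : ℕ, (∑' z : ℕ × ℕ, t (e (m, z)))
      = (q ^ m * qPoch q m) * ((qPochInf q)⁻¹) ^ 2 := by
    intro m
    rw [← innerDoubleSum hq m]
    apply tsum_congr
    rintro ⟨n1, n3⟩
    simp only [ht, he, Equiv.coe_fn_mk]
    have hx1 : qPoch q n1 ≠ 0 := qPoch_ne_zero hq n1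
    have hx2 : qPoch q m ≠ 0 := qPoch_ne_zero hq m
    have hx3 : qPoch q n3 ≠ 0 := qPoch_ne_zero hq n3
    rw [show n1 + m + n3 + n1 * m + m * n3 = (m + 1) * n1 + (m + (m + 1) * n3) by ring,
      pow_add, pow_add]
    field_simp
  have hsum_tel : Summable (fun m : ℕ => q ^ m * qPoch q m) := by
    have := (summable_tel hq).mul_left q⁻¹
    apply this.congr
    intro m
    rw [pow_succ']
    field_simp
  have h3 : ∑' m : ℕ, q ^ m * qPoch q m = q⁻¹ * (1 - qPochInf q) := by
    have : q * ∑' m : ℕ, q ^ m * qPoch q m = 1 - qPochInf q := by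
      rw [← tsum_mul_left, ← tel hq]
      apply tsum_congr
      intro m
      rw [pow_succ']
      ring
    field_simp
    linear_combination this
  calc ∑' n, t n = ∑' (m : ℕ), ∑' (z : ℕ × ℕ), t (e (m, z)) := by rw [h0, h1]
    _ = ∑' (m : ℕ), (q ^ m * qPoch q m) * ((qPochInf q)⁻¹) ^ 2 := tsum_congr h2
    _ = (∑' (m : ℕ), q ^ m * qPoch q m) * ((qPochInf q)⁻¹) ^ 2 := tsum_mul_right
    _ = (q⁻¹ * (1 - qPochInf q)) * ((qPochInf q)⁻¹) ^ 2 := by rw [h3]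
    _ = q⁻¹ * (1 - qPochInf q) / qPochInf q ^ 2 := by
        rw [div_eq_mul_inv, ← inv_pow]


theorem stmt4 (q : ℂ) (hq : ‖q‖ < 1) (hq0 : q ≠ 0) :
    ∑' n : ℕ × ℕ × ℕ,
        q ^ (n.1 + n.2.1 + n.2.2 + n.1 * n.2.1 + n.2.1 * n.2.2)
          / (qPoch q n.1 * qPoch q n.2.1 * qPoch q n.2.2)
      = q⁻¹ * (1 - qPochInf q) / qPochInf q ^ 2 := by
  exact stmt4' q hq hq0
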